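/- Let A ∈ B(X), B ∈ B(Y), C ∈ B(Y, X) and let M_C = [[A, C],[0, B]] be the upper triangular operator matrix on X ⊕ Y. If A is invertible, then M_C is left generalized Drazin invertible if and only if B is left generalized Drazin invertible. -/

import Mathlib

open Function Set

noncomputable section

namespace PseudoBF

variable {E : Type*} [NormedAddCommGroup E] [NormedSpace ℂ E]

/-- `M` is invariant under `T`. -/
def Inv (T : E →L[ℂ] E) (M : Submodule ℂ E) : Prop := ∀ x ∈ M, T x ∈ M

/-- Restriction of `T` to a `T`-invariant submodule, as a continuous linear map. -/
def restr (T : E →L[ℂ] E) {M : Submodule ℂ E} (h : Inv T M) : M →L[ℂ] M where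
  toLinearMap := (T : E →ₗ[ℂ] E).restrict h
  cont := (T.continuous.comp continuous_subtype_val).subtype_mk _

/-- Upper semi-Fredholm: finite dimensional kernel and closed range. -/
def UpperSemiFredholm (T : E →L[ℂ] E) : Prop :=
  FiniteDimensional ℂ (LinearMap.ker (T : E →ₗ[ℂ] E)) ∧ IsClosed (LinearMap.range (T : E →ₗ[ℂ] E) : Set E)

/-- Lower semi-Fredholm: range of finite codimension. -/
def LowerSemiFredholm (T : E →L[ℂ] E) : Prop :=
  FiniteDimensional ℂ (E ⧸ LinearMap.range (T : E →ₗ[ℂ] E))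

/-- Semi-Fredholm: upper or lower semi-Fredholm. -/
def SemiFredholm (T : E →L[ℂ] E) : Prop :=
  UpperSemiFredholm T ∨ LowerSemiFredholm T

/-- Quasi-nilpotent: spectral radius zero. -/
def QuasiNilpotentOp (T : E →L[ℂ] E) : Prop := spectralRadius ℂ T = 0

/-- Bounded below. -/
def BoundedBelow (T : E →L[ℂ] E) : Prop := ∃ c > 0, ∀ x, c * ‖x‖ ≤ ‖T x‖

/-- Left invertible: bounded below with complemented closed range. -/
def LeftInvertibleOp (T : E →L[ℂ] E) : Prop :=
  BoundedBelow T ∧ IsClosed (LinearMap.range (T : E →ₗ[ℂ] E) : Set E) ∧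
    ∃ P : Submodule ℂ E, IsClosed (P : Set E) ∧ IsCompl (LinearMap.range (T : E →ₗ[ℂ] E)) P

/-- Right invertible: surjective with complemented kernel. -/
def RightInvertibleOp (T : E →L[ℂ] E) : Prop :=
  Surjective T ∧ ∃ P : Submodule ℂ E, IsClosed (P : Set E) ∧ IsCompl (LinearMap.ker (T : E →ₗ[ℂ] E)) P

/-- `T` decomposes as a direct sum, along closed invariant subspaces, of an operator
satisfying `P` and a quasi-nilpotent operator. -/
def Decomp (T : E →L[ℂ] E) (P : ∀ M : Submodule ℂ E, (M →L[ℂ] M) → Prop) : Prop :=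
  ∃ (M N : Submodule ℂ E) (hM : Inv T M) (hN : Inv T N),
    IsClosed (M : Set E) ∧ IsClosed (N : Set E) ∧ IsCompl M N ∧
      P M (restr T hM) ∧ QuasiNilpotentOp (restr T hN)

def PseudoUpperSemiBFredholm (T : E →L[ℂ] E) : Prop :=
  Decomp T fun _ S => UpperSemiFredholm S

def PseudoLowerSemiBFredholm (T : E →L[ℂ] E) : Prop :=
  Decomp T fun _ S => LowerSemiFredholm S

def PseudoSemiBFredholm (T : E →L[ℂ] E) : Prop :=
  Decomp T fun _ S => SemiFredholm S

def PseudoBFredholm (T : E →L[ℂ] E) : Prop :=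
  Decomp T fun _ S => UpperSemiFredholm S ∧ LowerSemiFredholm S

def LeftGenDrazinInvertible (T : E →L[ℂ] E) : Prop :=
  Decomp T fun _ S => LeftInvertibleOp S

def RightGenDrazinInvertible (T : E →L[ℂ] E) : Prop :=
  Decomp T fun _ S => RightInvertibleOp S

def GenDrazinInvertible (T : E →L[ℂ] E) : Prop :=
  Decomp T fun _ S => IsUnit S

def sigma_pBuF (T : E →L[ℂ] E) : Set ℂ :=
  {l | ¬ PseudoUpperSemiBFredholm (T - l • 1)}

def sigma_pBlF (T : E →L[ℂ] E) : Set ℂ :=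
  {l | ¬ PseudoLowerSemiBFredholm (T - l • 1)}

def sigma_pBF (T : E →L[ℂ] E) : Set ℂ :=
  {l | ¬ PseudoBFredholm (T - l • 1)}

def sigma_lgD (T : E →L[ℂ] E) : Set ℂ :=
  {l | ¬ LeftGenDrazinInvertible (T - l • 1)}

def sigma_rgD (T : E →L[ℂ] E) : Set ℂ :=
  {l | ¬ RightGenDrazinInvertible (T - l • 1)}

def sigma_gD (T : E →L[ℂ] E) : Set ℂ :=
  {l | ¬ GenDrazinInvertible (T - l • 1)}

/-- The approximate point spectrum. -/
def sigma_ap (T : E →L[ℂ] E) : Set ℂ := {l | ¬ BoundedBelow (T - l • 1)}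

/-- The surjectivity spectrum. -/
def sigma_su (T : E →L[ℂ] E) : Set ℂ := {l | ¬ Surjective ⇑(T - l • 1)}

/-- `T` has the single valued extension property at `l0`. -/
def HasSVEPAt (T : E →L[ℂ] E) (l0 : ℂ) : Prop :=
  ∀ U : Set ℂ, IsOpen U → l0 ∈ U → ∀ f : ℂ → E, AnalyticOnNhd ℂ f U →
    (∀ z ∈ U, T (f z) = z • f z) → ∀ z ∈ U, f z = 0

/-- The set where `T` fails to have the SVEP. -/
def S_ (T : E →L[ℂ] E) : Set ℂ := {l | ¬ HasSVEPAt T l}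

/-- `l` is an accumulation point of `S`. -/
def IsAccPtOf (l : ℂ) (S : Set ℂ) : Prop :=
  ∀ ε > 0, ∃ μ ∈ S, μ ≠ l ∧ ‖μ - l‖ < ε

/-- The Banach-space adjoint of `T`, acting on the dual space. -/
def adj (T : E →L[ℂ] E) : StrongDual ℂ E →L[ℂ] StrongDual ℂ E :=
  (ContinuousLinearMap.compL ℂ E E ℂ).flip T


def Mc {X Y : Type*} [NormedAddCommGroup X] [NormedSpace ℂ X]
    [NormedAddCommGroup Y] [NormedSpace ℂ Y]
    (A : X →L[ℂ] X) (B : Y →L[ℂ] Y) (C : Y →L[ℂ] X) : (X × Y) →L[ℂ] (X × Y) :=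
  (A.comp (ContinuousLinearMap.fst ℂ X Y) + C.comp (ContinuousLinearMap.snd ℂ X Y)).prod
    (B.comp (ContinuousLinearMap.snd ℂ X Y))


section Helpers
open scoped NNReal ENNReal Topology
variable {F G : Type*} [NormedAddCommGroup F] [NormedSpace ℂ F]
  [NormedAddCommGroup G] [NormedSpace ℂ G]

lemma restr_coe (T : E →L[ℂ] E) {M : Submodule ℂ E} (h : Inv T M) (x : M) :
    (restr T h x : E) = T x := rfl

lemma restr_pow_coe (T : E →L[ℂ] E) {M : Submodule ℂ E} (h : Inv T M) (k : ℕ) (x : M) :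
    ((restr T h ^ k) x : E) = (T ^ k) (x : E) := by
  induction k generalizing x with
  | zero => simp
  | succ n ih =>
    rw [pow_succ, pow_succ, ContinuousLinearMap.mul_apply, ContinuousLinearMap.mul_apply,
      ih, restr_coe]

lemma isClosed_range_of_bound [CompleteSpace F] (f : F →L[ℂ] G) {c : ℝ} (hc : 0 < c)
    (h : ∀ x, c * ‖x‖ ≤ ‖f x‖) : IsClosed (Set.range f) := by
  have ha : AntilipschitzWith (⟨c, hc.le⟩ : NNReal)⁻¹ f := by
    refine f.antilipschitz_of_bound fun x => ?_
    have h1 : ‖x‖ = c⁻¹ * (c * ‖x‖) := by field_simp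
    change ‖x‖ ≤ c⁻¹ * ‖f x‖
    rw [h1]
    exact mul_le_mul_of_nonneg_left (h x) (by positivity)
  exact ha.isClosed_range f.uniformContinuous

lemma boundedBelow_isClosed_range [CompleteSpace F] (S : F →L[ℂ] F) (h : BoundedBelow S) :
    IsClosed (LinearMap.range (S : F →ₗ[ℂ] F) : Set F) := by
  obtain ⟨c, hc, hb⟩ := h
  have h2 := isClosed_range_of_bound S hc hb
  have h3 : (LinearMap.range (S : F →ₗ[ℂ] F) : Set F) = Set.range S := LinearMap.coe_range _
  rwa [h3]

lemma spectrum_conj_subset (e : F ≃L[ℂ] G) {S : F →L[ℂ] F} {S' : G →L[ℂ] G}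
    (hconj : ∀ x, S' (e x) = e (S x)) : spectrum ℂ S' ⊆ spectrum ℂ S := by
  intro z hz
  by_contra hns
  obtain ⟨u, hu⟩ := spectrum.notMem_iff.mp hns
  have h1 : ∀ x, (↑u⁻¹ : F →L[ℂ] F) ((algebraMap ℂ (F →L[ℂ] F) z - S) x) = x := by
    intro x
    conv_lhs => rw [← hu]
    rw [← ContinuousLinearMap.mul_apply, u.inv_mul, ContinuousLinearMap.one_apply]
  have h2 : ∀ x, (algebraMap ℂ (F →L[ℂ] F) z - S) ((↑u⁻¹ : F →L[ℂ] F) x) = x := by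
    intro x
    conv_lhs => rw [← hu]
    rw [← ContinuousLinearMap.mul_apply, u.mul_inv, ContinuousLinearMap.one_apply]
  have key : ∀ y, (algebraMap ℂ (G →L[ℂ] G) z - S') (e y)
      = e ((algebraMap ℂ (F →L[ℂ] F) z - S) y) := by
    intro y
    simp only [ContinuousLinearMap.sub_apply, Algebra.algebraMap_eq_smul_one,
      ContinuousLinearMap.smul_apply, ContinuousLinearMap.one_apply, map_sub, map_smul, hconj]
  set R' : G →L[ℂ] G := (↑e : F →L[ℂ] G).comp (((↑u⁻¹ : F →L[ℂ] F)).comp (↑e.symm : G →L[ℂ] F))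
    with hR'
  refine absurd hz (spectrum.notMem_iff.mpr ⟨⟨algebraMap ℂ (G →L[ℂ] G) z - S', R', ?_, ?_⟩, rfl⟩)
  · ext x
    show (algebraMap ℂ (G →L[ℂ] G) z - S') (e ((↑u⁻¹ : F →L[ℂ] F) (e.symm x))) = x
    rw [key, h2, e.apply_symm_apply]
  · ext x
    show e ((↑u⁻¹ : F →L[ℂ] F) (e.symm ((algebraMap ℂ (G →L[ℂ] G) z - S') x))) = x
    conv_lhs => rw [← e.apply_symm_apply x]
    rw [key, e.symm_apply_apply, h1, e.apply_symm_apply]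

lemma quasiNilpotent_conj (e : F ≃L[ℂ] G) {S : F →L[ℂ] F} {S' : G →L[ℂ] G}
    (hconj : ∀ x, S' (e x) = e (S x)) (hS : QuasiNilpotentOp S) : QuasiNilpotentOp S' := by
  have hsub := spectrum_conj_subset e hconj
  unfold QuasiNilpotentOp spectralRadius at *
  refine le_antisymm ?_ (zero_le)
  rw [← hS]
  exact iSup₂_le fun k hk =>
    le_iSup₂ (f := fun k (_ : k ∈ spectrum ℂ S) => (‖k‖₊ : ℝ≥0∞)) k (hsub hk)

lemma eventually_pow_norm_le [CompleteSpace F] (S : F →L[ℂ] F) (hS : QuasiNilpotentOp S)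
    {r : ℝ} (hr : 0 < r) : ∀ᶠ k in Filter.atTop, ‖S ^ k‖ ≤ r ^ k := by
  have hε : 0 < min r 1 := lt_min hr one_pos
  have h0 : Filter.Tendsto (fun n : ℕ => (‖S ^ n‖₊ : ℝ≥0∞) ^ (1 / n : ℝ)) Filter.atTop (nhds 0) := by
    have := spectrum.pow_nnnorm_pow_one_div_tendsto_nhds_spectralRadius S
    rwa [hS] at this
  have hεE : (0 : ℝ≥0∞) < ENNReal.ofReal (min r 1) := by simp [hε, hr]
  have hev := h0.eventually_lt_const hεE
  filter_upwards [hev, Filter.eventually_ge_atTop 1] with n hn hn1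
  have hn0 : (n : ℝ) ≠ 0 := Nat.cast_ne_zero.mpr (by omega)
  have hx : (‖S ^ n‖₊ : ℝ≥0∞) ≤ ENNReal.ofReal (min r 1) ^ (n : ℝ) := by
    have h2 := ENNReal.rpow_le_rpow hn.le (by positivity : (0:ℝ) ≤ (n:ℝ))
    rwa [← ENNReal.rpow_mul, one_div_mul_cancel hn0, ENNReal.rpow_one] at h2
  rw [ENNReal.ofReal_rpow_of_pos hε, ← ENNReal.ofReal_coe_nnreal, coe_nnnorm] at hx
  have h3 : ‖S ^ n‖ ≤ (min r 1) ^ (n : ℝ) :=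
    (ENNReal.ofReal_le_ofReal_iff (by positivity)).mp hx
  rw [Real.rpow_natCast] at h3
  exact h3.trans (pow_le_pow_left₀ hε.le (min_le_left _ _) n)

end Helpers

section MoreHelpers
open scoped NNReal ENNReal Topology
variable {F : Type*} [NormedAddCommGroup F] [NormedSpace ℂ F]

lemma pow_apply_le (f : F →L[ℂ] F) (k : ℕ) (x : F) : ‖(f ^ k) x‖ ≤ ‖f‖ ^ k * ‖x‖ := by
  induction k generalizing x with
  | zero => simp
  | succ n ih =>
    rw [pow_succ, ContinuousLinearMap.mul_apply]
    calc ‖(f ^ n) (f x)‖ ≤ ‖f‖ ^ n * ‖f x‖ := ih _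
      _ ≤ ‖f‖ ^ n * (‖f‖ * ‖x‖) :=
        mul_le_mul_of_nonneg_left (f.le_opNorm x) (by positivity)
      _ = ‖f‖ ^ (n + 1) * ‖x‖ := by ring

variable {X Y : Type*} [NormedAddCommGroup X] [NormedSpace ℂ X]
    [NormedAddCommGroup Y] [NormedSpace ℂ Y]

lemma Mc_apply (A : X →L[ℂ] X) (B : Y →L[ℂ] Y) (C : Y →L[ℂ] X) (v : X × Y) :
    Mc A B C v = (A v.1 + C v.2, B v.2) := rfl

lemma Mc_boundedBelow_aux (A : X →L[ℂ] X) (B : Y →L[ℂ] Y) (C : Y →L[ℂ] X)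
    (A' : X →L[ℂ] X) (hA'A : ∀ x, A' (A x) = x)
    (M : Submodule ℂ Y) {cB : ℝ} (hcB : 0 < cB) (hbB : ∀ y ∈ M, cB * ‖y‖ ≤ ‖B y‖) :
    ∃ c > 0, ∀ v : X × Y, v.2 ∈ M → c * ‖v‖ ≤ ‖Mc A B C v‖ := by
  set α : ℝ := ‖A'‖ + 1 with hαdef
  have hα0 : (0:ℝ) < α := by positivity
  have hα1 : (1:ℝ) ≤ α := by have := norm_nonneg A'; simp only [hαdef]; linarith
  have hA'le : ‖A'‖ ≤ α := by simp only [hαdef]; linarith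
  set γ : ℝ := ‖C‖ + 1 with hγdef
  have hγ1 : (1:ℝ) ≤ γ := by have := norm_nonneg C; simp only [hγdef]; linarith
  set δ : ℝ := (2*α*γ)⁻¹ with hδdef
  have hδ0 : 0 < δ := by positivity
  refine ⟨min (cB * δ) ((2*α)⁻¹), lt_min (by positivity) (by positivity), fun v hv2 => ?_⟩
  set c : ℝ := min (cB * δ) ((2*α)⁻¹) with hcdef
  rw [Mc_apply, Prod.norm_def, Prod.norm_def]
  by_cases hcase : δ * max ‖v.1‖ ‖v.2‖ ≤ ‖v.2‖
  · refine le_trans ?_ (le_max_right _ _)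
    have h5 : cB * ‖v.2‖ ≤ ‖B v.2‖ := hbB _ hv2
    calc c * max ‖v.1‖ ‖v.2‖ ≤ (cB * δ) * max ‖v.1‖ ‖v.2‖ :=
          mul_le_mul_of_nonneg_right (min_le_left _ _) (le_max_iff.mpr (Or.inl (norm_nonneg _)))
      _ = cB * (δ * max ‖v.1‖ ‖v.2‖) := by ring
      _ ≤ cB * ‖v.2‖ := mul_le_mul_of_nonneg_left hcase hcB.le
      _ ≤ ‖B v.2‖ := h5
  · push_neg at hcase
    refine le_trans ?_ (le_max_left _ _)
    have ht0 : (0:ℝ) ≤ max ‖v.1‖ ‖v.2‖ := le_max_iff.mpr (Or.inl (norm_nonneg _))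
    have hαγδ : α * γ * δ = 2⁻¹ := by rw [hδdef]; field_simp
    have hδhalf : δ ≤ 2⁻¹ := by
      rw [hδdef]
      refine inv_anti₀ (by norm_num) (by nlinarith)
    have hta : max ‖v.1‖ ‖v.2‖ = ‖v.1‖ := by
      rcases max_cases ‖v.1‖ ‖v.2‖ with ⟨h6, _⟩ | ⟨h6, h7⟩
      · exact h6
      · exfalso
        rw [h6] at hcase
        have h8 := norm_nonneg v.2
        have h9 : δ * ‖v.2‖ ≤ 2⁻¹ * ‖v.2‖ := mul_le_mul_of_nonneg_right hδhalf h8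
        linarith
    have h6 : max ‖v.1‖ ‖v.2‖ ≤ α * ‖A v.1‖ := by
      calc max ‖v.1‖ ‖v.2‖ = ‖v.1‖ := hta
        _ = ‖A' (A v.1)‖ := by rw [hA'A]
        _ ≤ ‖A'‖ * ‖A v.1‖ := A'.le_opNorm _
        _ ≤ α * ‖A v.1‖ := mul_le_mul_of_nonneg_right hA'le (norm_nonneg _)
    have h7 : ‖A v.1‖ ≤ ‖A v.1 + C v.2‖ + ‖C v.2‖ := by
      have h8 := norm_add_le (A v.1 + C v.2) (-(C v.2))
      simpa using h8
    have h9 : ‖C v.2‖ ≤ γ * ‖v.2‖ := by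
      calc ‖C v.2‖ ≤ ‖C‖ * ‖v.2‖ := C.le_opNorm _
        _ ≤ γ * ‖v.2‖ := mul_le_mul_of_nonneg_right (by simp [hγdef]) (norm_nonneg _)
    have h10 : c ≤ (2*α)⁻¹ := min_le_right _ _
    have h12 : ‖v.2‖ ≤ δ * max ‖v.1‖ ‖v.2‖ := hcase.le
    calc c * max ‖v.1‖ ‖v.2‖ ≤ (2*α)⁻¹ * max ‖v.1‖ ‖v.2‖ :=
        mul_le_mul_of_nonneg_right h10 ht0
      _ ≤ ‖A v.1 + C v.2‖ := by
          rw [inv_mul_le_iff₀ (by positivity)]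
          have hA1 : ‖C v.2‖ ≤ γ * (δ * max ‖v.1‖ ‖v.2‖) :=
            h9.trans (mul_le_mul_of_nonneg_left h12 (by positivity))
          have hA2 : α * ‖A v.1‖ ≤ α * (‖A v.1 + C v.2‖ + γ * (δ * max ‖v.1‖ ‖v.2‖)) :=
            mul_le_mul_of_nonneg_left (by linarith) hα0.le
          have hA3 : α * (γ * (δ * max ‖v.1‖ ‖v.2‖)) = 2⁻¹ * max ‖v.1‖ ‖v.2‖ := by
            rw [show α * (γ * (δ * max ‖v.1‖ ‖v.2‖)) = (α*γ*δ) * max ‖v.1‖ ‖v.2‖ from by ring,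
              hαγδ]
          have hA4 : α * (‖A v.1 + C v.2‖ + γ * (δ * max ‖v.1‖ ‖v.2‖))
              = α * ‖A v.1 + C v.2‖ + α * (γ * (δ * max ‖v.1‖ ‖v.2‖)) := by ring
          have hA5 : 2 * α * ‖A v.1 + C v.2‖ = 2 * (α * ‖A v.1 + C v.2‖) := by ring
          have hB1 : max ‖v.1‖ ‖v.2‖ ≤ α * (‖A v.1 + C v.2‖ + γ * (δ * max ‖v.1‖ ‖v.2‖)) :=
            h6.trans hA2
          rw [hA4, hA3] at hB1
          rw [hA5]
          generalize hP : α * ‖A v.1 + C v.2‖ = PP at hB1 ⊢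
          generalize hm : max ‖v.1‖ ‖v.2‖ = mm at hB1 ⊢
          linarith only [hB1]

end MoreHelpers


set_option maxHeartbeats 2000000 in
set_option synthInstance.maxHeartbeats 400000 in
theorem stmt14 {X Y : Type*} [NormedAddCommGroup X] [NormedSpace ℂ X] [CompleteSpace X]
    [NormedAddCommGroup Y] [NormedSpace ℂ Y] [CompleteSpace Y]
    (A : X →L[ℂ] X) (B : Y →L[ℂ] Y) (C : Y →L[ℂ] X) (hA : IsUnit A) :
    LeftGenDrazinInvertible (Mc A B C) ↔ LeftGenDrazinInvertible B := by
  obtain ⟨uA, huA⟩ := hA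
  set A' : X →L[ℂ] X := ↑uA⁻¹ with hA'def
  have hA'A : ∀ x, A' (A x) = x := fun x => by
    have h := DFunLike.congr_fun uA.inv_mul x
    simpa [ContinuousLinearMap.mul_apply, huA] using h
  have hAA' : ∀ x, A (A' x) = x := fun x => by
    have h := DFunLike.congr_fun uA.mul_inv x
    simpa [ContinuousLinearMap.mul_apply, huA] using h
  set α : ℝ := ‖A'‖ + 1 with hαdef
  have hα0 : (0:ℝ) < α := by positivity
  have hα1 : (1:ℝ) ≤ α := by
    have := norm_nonneg A'; simp only [hαdef]; linarith
  have hA'le : ‖A'‖ ≤ α := by simp only [hαdef]; linarith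
  constructor
  · rintro ⟨M', N', hM', hN', hM'c, hN'c, hcompl, hleft, hq⟩
    haveI : CompleteSpace M' := hM'c.completeSpace_coe
    haveI : CompleteSpace N' := hN'c.completeSpace_coe
    set Pp : (X × Y) →L[ℂ] M' := M'.linearProjOfClosedCompl N' hcompl hM'c hN'c with hPp
    set Qq : (X × Y) →L[ℂ] N' := N'.linearProjOfClosedCompl M' hcompl.symm hN'c hM'c with hQq
    have hPpapp : ∀ v, Pp v = M'.projectionOnto N' hcompl v := fun v => by
      rw [hPp, Submodule.coe_continuous_linearProjOfClosedCompl']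
    have hQqapp : ∀ v, Qq v = N'.projectionOnto M' hcompl.symm v := fun v => by
      rw [hQq, Submodule.coe_continuous_linearProjOfClosedCompl']
    have hPQ : ∀ v : X × Y, ((Pp v : X × Y)) + ((Qq v : X × Y)) = v := by
      intro v
      rw [hPpapp, hQqapp]
      exact Submodule.projection_add_projection_eq_self hcompl v
    have hQ0 : ∀ v ∈ M', Qq v = 0 := by
      intro v hv
      rw [hQqapp]
      exact Submodule.projectionOnto_apply_of_mem_right hcompl.symm hv
    have hQid : ∀ n : N', Qq ↑n = n := by
      intro n
      rw [hQqapp]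
      exact Submodule.projectionOnto_apply_left hcompl.symm n
    have hQT : ∀ v, Qq (Mc A B C v) = restr (Mc A B C) hN' (Qq v) := by
      intro v
      conv_lhs => rw [← hPQ v]
      rw [map_add, map_add]
      rw [hQ0 _ (hM' _ (Pp v).2)]
      have h2 : Qq (Mc A B C ((Qq v : X × Y)))
          = ⟨Mc A B C ((Qq v : X × Y)), hN' _ (Qq v).2⟩ :=
        hQid ⟨Mc A B C ((Qq v : X × Y)), hN' _ (Qq v).2⟩
      rw [zero_add, h2]
      rfl
    have hQTk : ∀ (k : ℕ) v, Qq ((Mc A B C ^ k) v) = ((restr (Mc A B C) hN') ^ k) (Qq v) := by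
      intro k
      induction k with
      | zero => intro v; simp
      | succ n ih =>
        intro v
        rw [pow_succ, pow_succ, ContinuousLinearMap.mul_apply, ContinuousLinearMap.mul_apply,
          ih, hQT]
    have hTpow0 : ∀ (k : ℕ) (ξ : X), (Mc A B C ^ k) (((A' ^ k) ξ, (0:Y)) : X × Y) = (ξ, 0) := by
      intro k
      induction k with
      | zero => intro ξ; simp
      | succ n ih =>
        intro ξ
        have h1 : Mc A B C (((A' ^ (n+1)) ξ, (0:Y)) : X × Y) = (((A' ^ n) ξ, (0:Y)) : X × Y) := by
          rw [Mc_apply]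
          ext
          · show A ((A' ^ (n+1)) ξ) + C 0 = (A' ^ n) ξ
            rw [map_zero, add_zero, pow_succ', ContinuousLinearMap.mul_apply, hAA']
          · show B 0 = 0
            exact map_zero B
        rw [pow_succ, ContinuousLinearMap.mul_apply, h1, ih]
    have hX₀M' : ∀ x : X, ((x, (0:Y)) : X × Y) ∈ M' := by
      intro x
      have hq_ev := eventually_pow_norm_le (restr (Mc A B C) hN') hq
        (r := (2*α)⁻¹) (by positivity)
      have hbound : ∀ᶠ k in Filter.atTop,
          ‖Qq ((x, (0:Y)) : X × Y)‖ ≤ (2⁻¹:ℝ)^k * (‖Qq‖ * ‖x‖) := by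
        filter_upwards [hq_ev] with k hk
        have h1 : Qq ((x, (0:Y)) : X × Y)
            = ((restr (Mc A B C) hN') ^ k) (Qq (((A' ^ k) x, (0:Y)) : X × Y)) := by
          rw [← hQTk, hTpow0]
        rw [h1]
        have h2 : ‖(((A' ^ k) x, (0:Y)) : X × Y)‖ = ‖(A' ^ k) x‖ := by
          rw [Prod.norm_def]
          simp [max_eq_left (norm_nonneg _)]
        calc ‖((restr (Mc A B C) hN') ^ k) (Qq (((A' ^ k) x, (0:Y)) : X × Y))‖
            ≤ ‖(restr (Mc A B C) hN') ^ k‖ * ‖Qq (((A' ^ k) x, (0:Y)) : X × Y)‖ :=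
              ContinuousLinearMap.le_opNorm _ _
          _ ≤ ((2*α)⁻¹)^k * (‖Qq‖ * ((‖A'‖^k) * ‖x‖)) := by
              refine mul_le_mul hk ?_ (norm_nonneg _) (by positivity)
              calc ‖Qq (((A' ^ k) x, (0:Y)) : X × Y)‖
                  ≤ ‖Qq‖ * ‖(((A' ^ k) x, (0:Y)) : X × Y)‖ := Qq.le_opNorm _
                _ ≤ ‖Qq‖ * (‖A'‖^k * ‖x‖) := by
                    rw [h2]
                    exact mul_le_mul_of_nonneg_left (pow_apply_le A' k x) Qq.opNorm_nonneg
          _ ≤ ((2*α)⁻¹)^k * (‖Qq‖ * ((α^k) * ‖x‖)) := by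
              refine mul_le_mul_of_nonneg_left ?_ (by positivity)
              refine mul_le_mul_of_nonneg_left ?_ Qq.opNorm_nonneg
              exact mul_le_mul_of_nonneg_right (pow_le_pow_left₀ (norm_nonneg _) hA'le _)
                (norm_nonneg _)
          _ = (2⁻¹:ℝ)^k * (‖Qq‖ * ‖x‖) := by
              have hhalf : (2*α)⁻¹ * α = 2⁻¹ := by field_simp
              rw [show ((2*α)⁻¹)^k * (‖Qq‖ * ((α^k) * ‖x‖))
                  = (((2*α)⁻¹ * α)^k) * (‖Qq‖ * ‖x‖) from by rw [mul_pow]; ring, hhalf]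
      have htend : Filter.Tendsto (fun k : ℕ => (2⁻¹:ℝ)^k * (‖Qq‖ * ‖x‖))
          Filter.atTop (nhds 0) := by
        have h3 : Filter.Tendsto (fun k : ℕ => (2⁻¹:ℝ)^k) Filter.atTop (nhds 0) :=
          tendsto_pow_atTop_nhds_zero_of_lt_one (by norm_num) (by norm_num)
        simpa using h3.mul_const (‖Qq‖ * ‖x‖)
      have h4 : ‖Qq ((x, (0:Y)) : X × Y)‖ ≤ 0 := ge_of_tendsto htend hbound
      have h5 : Qq ((x, (0:Y)) : X × Y) = 0 := by
        rwa [norm_le_zero_iff] at h4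
      have h6 := hPQ ((x, (0:Y)) : X × Y)
      rw [h5] at h6
      rw [ZeroMemClass.coe_zero, add_zero] at h6
      rw [← h6]
      exact (Pp ((x, (0:Y)) : X × Y)).2
    -- define M and N
    set MM : Submodule ℂ Y := Submodule.comap (ContinuousLinearMap.inr ℂ X Y : Y →ₗ[ℂ] X × Y) M' with hMM
    set NN : Submodule ℂ Y := Submodule.map (ContinuousLinearMap.snd ℂ X Y : X × Y →ₗ[ℂ] Y) N' with hNN
    have hMMmem : ∀ y : Y, y ∈ MM ↔ (((0:X), y) : X × Y) ∈ M' := fun y => Iff.rfl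
    have hNNmem : ∀ y : Y, y ∈ NN ↔ ∃ v ∈ N', (v : X × Y).2 = y := fun y => Iff.rfl
    have fact1 : ∀ v ∈ M', (((0:X), (v : X × Y).2) : X × Y) ∈ M' := by
      intro v hv
      have h1 : (((0:X), (v : X × Y).2) : X × Y) = v - ((v : X × Y).1, (0:Y)) := by
        ext <;> simp
      rw [h1]
      exact sub_mem hv (hX₀M' _)
    have hQinr : ∀ (v : X × Y) (hv : v ∈ N'), Qq ((0:X), v.2) = ⟨v, hv⟩ := by
      intro v hv
      have h1 : (((0:X), v.2) : X × Y) = (((0:X), v.2) - v) + v := by abel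
      have h2 : (((0:X), v.2) : X × Y) - v ∈ M' := by
        have h3 : (((0:X), v.2) : X × Y) - v = (-v.1, (0:Y)) := by ext <;> simp
        rw [h3]
        exact hX₀M' _
      rw [h1, map_add, hQ0 _ h2, zero_add]
      exact hQid ⟨v, hv⟩
    have hNNsnd : ∀ y ∈ NN, ((Qq (((0:X), y) : X × Y) : X × Y)).2 = y := by
      rintro y ⟨v, hv, rfl⟩
      have h1 : (ContinuousLinearMap.snd ℂ X Y : X × Y →ₗ[ℂ] Y) v = v.2 := rfl
      rw [h1, hQinr v hv]
    have hMMclosed : IsClosed (MM : Set Y) := by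
      have h1 : (MM : Set Y) = (ContinuousLinearMap.inr ℂ X Y) ⁻¹' (M' : Set (X × Y)) := rfl
      rw [h1]
      exact hM'c.preimage (ContinuousLinearMap.inr ℂ X Y).continuous
    have hNNclosed : IsClosed (NN : Set Y) := by
      set χ : Y →L[ℂ] Y := (ContinuousLinearMap.snd ℂ X Y).comp
        (N'.subtypeL.comp (Qq.comp (ContinuousLinearMap.inr ℂ X Y))) with hχ
      have h1 : (NN : Set Y) = {y | χ y = y} := by
        ext y
        constructor
        · intro hy
          exact hNNsnd y hy
        · intro hy
          exact ⟨↑(Qq (((0:X), y) : X × Y)), (Qq _).2, hy⟩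
      rw [h1]
      exact isClosed_eq χ.continuous continuous_id
    have hMBinv : Inv B MM := by
      intro y hy
      have h1 := fact1 _ (hM' _ ((hMMmem y).mp hy))
      exact (hMMmem _).mpr h1
    have hNBinv : Inv B NN := by
      rintro y ⟨v, hv, rfl⟩
      exact ⟨Mc A B C v, hN' v hv, rfl⟩
    have hMN : IsCompl MM NN := by
      constructor
      · rw [Submodule.disjoint_def]
        rintro y hyM ⟨v, hv, rfl⟩
        have h1 : (((0:X), (v : X × Y).2) : X × Y) - v ∈ M' := by
          have h3 : (((0:X), (v:X×Y).2) : X × Y) - v = (-(v:X×Y).1, (0:Y)) := by ext <;> simp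
          rw [h3]
          exact hX₀M' _
        have h2 : v ∈ M' := by
          have h4 : v = (((0:X), (v:X×Y).2) : X × Y) - ((((0:X), (v:X×Y).2) : X × Y) - v) := by
            abel
          rw [h4]
          exact sub_mem ((hMMmem _).mp hyM) h1
        have h5 : v = 0 := Submodule.disjoint_def.mp hcompl.disjoint v h2 hv
        rw [h5]
        rfl
      · rw [codisjoint_iff, eq_top_iff]
        intro y _
        have h6 := hPQ (((0:X), y) : X × Y)
        refine Submodule.mem_sup.mpr ⟨((Pp (((0:X), y) : X × Y) : X × Y)).2, ?_,
          ((Qq (((0:X), y) : X × Y) : X × Y)).2, ⟨_, (Qq _).2, rfl⟩, ?_⟩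
        · exact (hMMmem _).mpr (fact1 _ (Pp _).2)
        · have h7 := congrArg Prod.snd h6
          simpa using h7
    -- left invertibility of restr B on MM
    obtain ⟨⟨c', hc', hb'⟩, hRclosed', P', hP'c, hP'compl⟩ := hleft
    haveI : CompleteSpace MM := hMMclosed.completeSpace_coe
    have hbddB : BoundedBelow (restr B hMBinv) := by
      refine ⟨c', hc', fun y => ?_⟩
      set w : X × Y := (-(A' (C ↑y)), (↑y : Y)) with hw
      have hwM : w ∈ M' := by
        have h1 : (((0:X), (y:Y)) : X × Y) ∈ M' := (hMMmem _).mp y.2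
        have h2 : w = (((0:X), (y:Y)) : X × Y) - ((A' (C ↑y), (0:Y)) : X × Y) := by
          ext <;> simp [hw]
        rw [h2]
        exact sub_mem h1 (hX₀M' _)
      have hTw : Mc A B C w = (((0:X), B ↑y) : X × Y) := by
        rw [Mc_apply]
        ext
        · show A (-(A' (C ↑y))) + C ↑y = 0
          rw [map_neg, hAA']
          abel
        · rfl
      have h3 : ‖y‖ ≤ ‖w‖ := by
        rw [hw, Prod.norm_def]
        exact le_max_right _ _
      have h4 : ‖restr (Mc A B C) hM' ⟨w, hwM⟩‖ = ‖Mc A B C w‖ := rfl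
      calc c' * ‖y‖ ≤ c' * ‖w‖ := mul_le_mul_of_nonneg_left h3 hc'.le
        _ = c' * ‖(⟨w, hwM⟩ : M')‖ := rfl
        _ ≤ ‖restr (Mc A B C) hM' ⟨w, hwM⟩‖ := hb' _
        _ = ‖Mc A B C w‖ := h4
        _ = ‖(((0:X), B ↑y) : X × Y)‖ := by rw [hTw]
        _ = ‖B ↑y‖ := by
            rw [Prod.norm_def]
            simp [max_eq_right (norm_nonneg _)]
        _ = ‖restr B hMBinv y‖ := rfl
    have hrangeBclosed : IsClosed (LinearMap.range (restr B hMBinv : MM →ₗ[ℂ] MM) : Set MM) :=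
      boundedBelow_isClosed_range _ hbddB
    -- complement of the range
    set φ : (M' : Submodule ℂ (X × Y)) →L[ℂ] MM :=
      ((ContinuousLinearMap.snd ℂ X Y).comp M'.subtypeL).codRestrict MM
        (fun w => (hMMmem _).mpr (fact1 _ w.2)) with hφ
    set lft : (MM : Submodule ℂ Y) →L[ℂ] M' :=
      ((ContinuousLinearMap.inr ℂ X Y).comp MM.subtypeL).codRestrict M'
        (fun y => (hMMmem _).mp y.2) with hlft
    have hφlift : ∀ y : MM, φ (lft y) = y := fun y => Subtype.ext rfl
    have hφT : ∀ w : M', φ (restr (Mc A B C) hM' w) = restr B hMBinv (φ w) :=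
      fun w => Subtype.ext rfl
    have hX₀range : ∀ w : (M' : Submodule ℂ (X × Y)), ((w : X × Y)).2 = 0 →
        w ∈ LinearMap.range (restr (Mc A B C) hM' : M' →ₗ[ℂ] M') := by
      intro w hw2
      refine ⟨⟨(A' ((w : X × Y).1), (0:Y)), hX₀M' _⟩, ?_⟩
      apply Subtype.ext
      show Mc A B C ((A' ((w : X × Y).1), (0:Y)) : X × Y) = (w : X × Y)
      rw [Mc_apply]
      ext
      · show A (A' ((w : X × Y).1)) + C 0 = (w : X × Y).1
        rw [map_zero, add_zero, hAA']
      · show B 0 = (w : X × Y).2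
        rw [map_zero, hw2]
    have hkerφ : ∀ w : (M' : Submodule ℂ (X × Y)), φ w = 0 → ((w : X × Y)).2 = 0 := by
      intro w hw
      exact congrArg Subtype.val hw
    set PB : Submodule ℂ MM := Submodule.map (φ : M' →ₗ[ℂ] MM) P' with hPB
    set Q' : (M' : Submodule ℂ (X × Y)) →L[ℂ] P' :=
      P'.linearProjOfClosedCompl (LinearMap.range (restr (Mc A B C) hM' : M' →ₗ[ℂ] M')) hP'compl.symm
        hP'c hRclosed' with hQ'
    have hQ'app : ∀ v, Q' v = P'.projectionOnto _ hP'compl.symm v := fun v => by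
      rw [hQ', Submodule.coe_continuous_linearProjOfClosedCompl']
    have hQ'0 : ∀ v ∈ LinearMap.range (restr (Mc A B C) hM' : M' →ₗ[ℂ] M'), Q' v = 0 := by
      intro v hv
      rw [hQ'app]
      exact Submodule.projectionOnto_apply_of_mem_right hP'compl.symm hv
    have hQ'id : ∀ (p) (hp : p ∈ P'), Q' p = ⟨p, hp⟩ := by
      intro p hp
      rw [hQ'app]
      exact Submodule.projectionOnto_apply_left hP'compl.symm ⟨p, hp⟩
    have hPBdescr : ∀ y : MM, y ∈ PB ↔ φ ↑(Q' (lft y)) = y := by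
      intro y
      constructor
      · rintro ⟨p, hp, rfl⟩
        have hd2 : ((((lft (φ p)) - p : M') : X × Y)).2 = 0 := by
          have := hkerφ ((lft (φ p)) - p) ?_
          · exact this
          · rw [map_sub, hφlift]
            simp
        have hdrange : (lft (φ p)) - p ∈ LinearMap.range (restr (Mc A B C) hM' : M' →ₗ[ℂ] M') :=
          hX₀range _ hd2
        have h8 : Q' (lft (φ p)) = ⟨p, hp⟩ := by
          have h9 : lft (φ p) = ((lft (φ p)) - p) + p := by abel
          rw [h9, map_add, hQ'0 _ hdrange, zero_add, hQ'id p hp]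
        exact congrArg (fun q : P' => φ (q : M')) h8
      · intro hy
        exact ⟨_, (Q' (lft y)).2, hy⟩
    have hPBclosed : IsClosed (PB : Set MM) := by
      have h1 : (PB : Set MM) = {y | φ ↑(Q' (lft y)) = y} := by
        ext y; exact hPBdescr y
      rw [h1]
      exact isClosed_eq (φ.comp (P'.subtypeL.comp (Q'.comp lft))).continuous continuous_id
    have hPBcompl : IsCompl (LinearMap.range (restr B hMBinv : MM →ₗ[ℂ] MM)) PB := by
      constructor
      · rw [Submodule.disjoint_def]
        rintro z ⟨y, rfl⟩ ⟨p, hp, hφp⟩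
        have h1 : restr B hMBinv y = φ (restr (Mc A B C) hM' (lft y)) := by
          rw [hφT, hφlift]
        have h2 : φ ((restr (Mc A B C) hM' (lft y)) - p) = 0 := by
          rw [map_sub, ← h1, show φ p = restr B hMBinv y from hφp, sub_self]
        have h3 : (restr (Mc A B C) hM' (lft y)) - p
            ∈ LinearMap.range (restr (Mc A B C) hM' : M' →ₗ[ℂ] M') := hX₀range _ (hkerφ _ h2)
        have h4 : p ∈ LinearMap.range (restr (Mc A B C) hM' : M' →ₗ[ℂ] M') := by
          have h5 : p = (restr (Mc A B C) hM' (lft y))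
              - ((restr (Mc A B C) hM' (lft y)) - p) := by abel
          rw [h5]
          exact sub_mem ⟨lft y, rfl⟩ h3
        have h6 : p = 0 := Submodule.disjoint_def.mp hP'compl.disjoint p h4 hp
        rw [← hφp, h6, map_zero]
      · rw [codisjoint_iff, eq_top_iff]
        intro z _
        have h1 : lft z ∈ LinearMap.range (restr (Mc A B C) hM' : M' →ₗ[ℂ] M') ⊔ P' := by
          rw [codisjoint_iff.mp hP'compl.codisjoint]; trivial
        obtain ⟨s, ⟨u, hu⟩, p, hp, hsp⟩ := Submodule.mem_sup.mp h1
        refine Submodule.mem_sup.mpr ⟨restr B hMBinv (φ u), ⟨φ u, rfl⟩, φ p, ⟨p, hp, rfl⟩, ?_⟩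
        rw [← hφT, show restr (Mc A B C) hM' u = s from hu]
        rw [← map_add, hsp, hφlift]
    -- quasinilpotency on NN
    have hNNquasi : QuasiNilpotentOp (restr B hNBinv) := by
      set f : (N' : Submodule ℂ (X × Y)) →L[ℂ] NN :=
        ((ContinuousLinearMap.snd ℂ X Y).comp N'.subtypeL).codRestrict NN
          (fun v => ⟨↑v, v.2, rfl⟩) with hf
      set g : (NN : Submodule ℂ Y) →L[ℂ] N' :=
        Qq.comp ((ContinuousLinearMap.inr ℂ X Y).comp NN.subtypeL) with hg
      have h1 : Function.LeftInverse g f := by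
        intro v
        show Qq (((0:X), ((v : X × Y)).2) : X × Y) = v
        rw [hQinr ↑v v.2]
      have h2 : Function.RightInverse g f := by
        intro y
        apply Subtype.ext
        show ((Qq (((0:X), (y : Y)) : X × Y) : X × Y)).2 = (y : Y)
        exact hNNsnd _ y.2
      set e := ContinuousLinearEquiv.equivOfInverse f g h1 h2 with he
      refine quasiNilpotent_conj e (S := restr (Mc A B C) hN') ?_ hq
      intro v
      apply Subtype.ext
      rfl
    exact ⟨MM, NN, hMBinv, hNBinv, hMMclosed, hNNclosed, hMN,
      ⟨hbddB, hrangeBclosed, PB, hPBclosed, hPBcompl⟩, hNNquasi⟩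
  · rintro ⟨M, N, hMB, hNB, hMc, hNc, hMN, hMleft, hNq⟩
    haveI : CompleteSpace N := hNc.completeSpace_coe
    haveI : CompleteSpace M := hMc.completeSpace_coe
    set S := restr B hNB with hSdef
    have hev : ∀ᶠ k in Filter.atTop, ‖S ^ k‖ ≤ ((2*α)⁻¹) ^ k :=
      eventually_pow_norm_le S hNq (by positivity)
    set term : ℕ → (N →L[ℂ] X) := fun k =>
      ((A' ^ (k+1)).comp (C.comp N.subtypeL)).comp (S ^ k) with hterm
    have hterm_bound : ∀ k, ‖term k‖ ≤ (α ^ (k+1) * ‖C‖) * ‖S ^ k‖ := by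
      intro k
      refine ContinuousLinearMap.opNorm_le_bound _ (by positivity) fun n => ?_
      have e1 : term k n = (A' ^ (k+1)) (C ((((S ^ k) n : N)) : Y)) := rfl
      rw [e1]
      calc ‖(A' ^ (k+1)) (C (((S ^ k) n : N) : Y))‖
          ≤ ‖A'‖ ^ (k+1) * ‖C ((((S ^ k) n : N)) : Y)‖ := pow_apply_le _ _ _
        _ ≤ ‖A'‖ ^ (k+1) * (‖C‖ * ‖(S ^ k) n‖) := by
            refine mul_le_mul_of_nonneg_left ?_ (by positivity)
            exact C.le_opNorm _
        _ ≤ α ^ (k+1) * (‖C‖ * (‖S ^ k‖ * ‖n‖)) := by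
            refine mul_le_mul (pow_le_pow_left₀ (norm_nonneg _) hA'le _) ?_ (by positivity)
              (by positivity)
            exact mul_le_mul_of_nonneg_left ((S ^ k).le_opNorm n) (norm_nonneg C)
        _ = ((α ^ (k+1) * ‖C‖) * ‖S ^ k‖) * ‖n‖ := by ring
    have hsum : Summable term := by
      have hgeo : Summable (fun k : ℕ => (α * ‖C‖) * (2:ℝ)⁻¹ ^ k) :=
        (summable_geometric_of_lt_one (by norm_num) (by norm_num)).mul_left _
      refine Summable.of_norm_bounded_eventually_nat (f := term)
        hgeo ?_
      · filter_upwards [hev] with k hk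
        calc ‖term k‖ ≤ (α ^ (k+1) * ‖C‖) * ‖S ^ k‖ := hterm_bound k
          _ ≤ (α ^ (k+1) * ‖C‖) * ((2*α)⁻¹) ^ k := by
              exact mul_le_mul_of_nonneg_left hk (by positivity)
          _ = (α * ‖C‖) * (2:ℝ)⁻¹ ^ k := by
              rw [mul_inv, mul_pow, pow_succ']
              have : α^k * α⁻¹^k = 1 := by rw [← mul_pow, mul_inv_cancel₀ hα0.ne', one_pow]
              linear_combination (α * ‖C‖ * 2⁻¹^k) * this
    set D : (N : Submodule ℂ Y) →L[ℂ] X := -(∑' k, term k) with hD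
    have hpt : ∀ n : N, Summable fun k => term k n := fun n =>
      hsum.mapL (ContinuousLinearMap.apply ℂ X n)
    have hDapp : ∀ n : N, D n = -∑' k, term k n := by
      intro n
      have h1 : (∑' k, term k) n = ∑' k, term k n :=
        (ContinuousLinearMap.apply ℂ X n).map_tsum hsum
      simp only [hD, ContinuousLinearMap.neg_apply, h1]
    have hSyl : ∀ n : N, A (D n) + C ↑n = D (S n) := by
      intro n
      set g : ℕ → X := fun k => (A' ^ k) (C (((S ^ k) n : N) : Y)) with hg
      have hA_term : ∀ k, A (term k n) = g k := by
        intro k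
        show A ((A' ^ (k+1)) (C (((S ^ k) n : N) : Y))) = _
        rw [pow_succ', ContinuousLinearMap.mul_apply, hAA']
      have hgsum : Summable g := by
        have h2 : Summable fun k => A (term k n) := (hpt n).mapL A
        simpa only [hA_term] using h2
      have hgs : ∀ k, g (k+1) = term k (S n) := by
        intro k
        have hps : (S ^ (k+1)) n = (S ^ k) (S n) := by
          rw [pow_succ, ContinuousLinearMap.mul_apply]
        show (A' ^ (k+1)) (C (((S ^ (k+1)) n : N) : Y)) = (A' ^ (k+1)) (C (((S ^ k) (S n) : N) : Y))
        rw [hps]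
      have hg0 : g 0 = C ↑n := by simp [hg]
      rw [hDapp n, hDapp (S n), map_neg, A.map_tsum (hpt n), tsum_congr hA_term,
        hgsum.tsum_eq_zero_add, hg0, tsum_congr hgs]
      abel
    -- the lift map
    set jN : (N : Submodule ℂ Y) →L[ℂ] X × Y := D.prod N.subtypeL with hjN
    have hjNapp : ∀ n : N, jN n = (D n, (n : Y)) := fun n => rfl
    set N' : Submodule ℂ (X × Y) := LinearMap.range (jN : N →ₗ[ℂ] X × Y) with hN'
    set M'' : Submodule ℂ (X × Y) := Submodule.prod ⊤ M with hM''
    have hmemM'' : ∀ v : X × Y, v ∈ M'' ↔ v.2 ∈ M := by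
      intro v; rw [hM'', Submodule.mem_prod]; simp
    have hTapp : ∀ v : X × Y, Mc A B C v = (A v.1 + C v.2, B v.2) := fun _ => rfl
    have hTjN : ∀ n : N, Mc A B C (jN n) = jN (S n) := by
      intro n
      rw [hjNapp, hTapp, hjNapp]
      have h1 : B ↑n = ((S n : N) : Y) := rfl
      rw [hSyl n, h1]
    have hM''inv : Inv (Mc A B C) M'' := by
      intro v hv
      rw [hmemM''] at hv ⊢
      exact hMB _ hv
    have hN'inv : Inv (Mc A B C) N' := by
      rintro v ⟨n, rfl⟩
      exact ⟨S n, (hTjN n).symm⟩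
    have hM''closed : IsClosed (M'' : Set (X × Y)) := by
      have : (M'' : Set (X × Y)) = (Set.univ : Set X) ×ˢ (M : Set Y) := by
        ext v; simp [hmemM'' v, Set.mem_prod]
      rw [this]
      exact isClosed_univ.prod hMc
    have hjNbound : ∀ n : N, 1 * ‖n‖ ≤ ‖jN n‖ := by
      intro n
      rw [one_mul, hjNapp]
      exact le_trans (le_refl _) (norm_snd_le (D n, (n : Y)))
    have hN'closed : IsClosed (N' : Set (X × Y)) := by
      have h1 : (N' : Set (X × Y)) = Set.range jN := LinearMap.coe_range _
      rw [h1]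
      exact isClosed_range_of_bound jN one_pos hjNbound
    have hdisj : Disjoint M'' N' := by
      rw [Submodule.disjoint_def]
      rintro v hvM ⟨n, rfl⟩
      have h2 : (n : Y) ∈ M := by
        have := (hmemM'' _).mp hvM
        exact this
      have h3 : (n : Y) = 0 := Submodule.disjoint_def.mp hMN.disjoint _ h2 n.2
      have h4 : n = 0 := by exact_mod_cast h3
      rw [h4, map_zero]
    have hcodisj : Codisjoint M'' N' := by
      rw [codisjoint_iff, eq_top_iff]
      intro v _
      have hv2 : v.2 ∈ M ⊔ N := by rw [codisjoint_iff.mp hMN.codisjoint]; trivial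
      obtain ⟨m, hm, nn, hn, hmn⟩ := Submodule.mem_sup.mp hv2
      refine Submodule.mem_sup.mpr ⟨(v.1 - D ⟨nn, hn⟩, m), (hmemM'' _).mpr hm,
        jN ⟨nn, hn⟩, ⟨⟨nn, hn⟩, rfl⟩, ?_⟩
      rw [hjNapp]
      ext
      · simp
      · simpa using hmn
    -- left invertibility of the restriction to M''
    haveI : CompleteSpace M'' := hM''closed.completeSpace_coe
    obtain ⟨cB, hcB, hbB⟩ := hMleft.1
    have hbB' : ∀ y ∈ M, cB * ‖y‖ ≤ ‖B y‖ := fun y hy => hbB ⟨y, hy⟩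
    obtain ⟨c, hc0, hcbound⟩ := Mc_boundedBelow_aux A B C A' hA'A M hcB hbB'
    have hbdd : BoundedBelow (restr (Mc A B C) hM''inv) := by
      refine ⟨c, hc0, fun w => ?_⟩
      have hw2 : ((w : X × Y)).2 ∈ M := (hmemM'' _).mp w.2
      exact hcbound (w : X × Y) hw2
    have hrangeClosed : IsClosed (LinearMap.range (restr (Mc A B C) hM''inv : M'' →ₗ[ℂ] M'') : Set M'') :=
      boundedBelow_isClosed_range _ hbdd
    obtain ⟨P, hPc, hPcompl⟩ := hMleft.2.2
    set ι : (M : Submodule ℂ Y) →L[ℂ] M'' :=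
      ((ContinuousLinearMap.inr ℂ X Y).comp M.subtypeL).codRestrict M''
        (fun m => (hmemM'' _).mpr m.2) with hι
    have hιapp : ∀ m : M, ((ι m : X × Y)) = ((0 : X), (m : Y)) := fun m => rfl
    set P'' : Submodule ℂ M'' := Submodule.map (ι : M →ₗ[ℂ] M'') P with hP''
    haveI : CompleteSpace P := hPc.completeSpace_coe
    have hP''closed : IsClosed (P'' : Set M'') := by
      have h1 : (P'' : Set M'') = Set.range (ι.comp P.subtypeL) := by
        ext w
        constructor
        · rintro ⟨m, hm, rfl⟩; exact ⟨⟨m, hm⟩, rfl⟩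
        · rintro ⟨p, rfl⟩; exact ⟨(p : M), p.2, rfl⟩
      rw [h1]
      refine isClosed_range_of_bound _ one_pos fun p => ?_
      rw [one_mul]
      have h2 : ‖ι.comp P.subtypeL p‖ = ‖((0 : X), ((p : M) : Y))‖ := rfl
      rw [h2, Prod.norm_def]
      simp
    have hPcomplP'' : IsCompl (LinearMap.range (restr (Mc A B C) hM''inv : M'' →ₗ[ℂ] M'')) P'' := by
      constructor
      · rw [Submodule.disjoint_def]
        rintro w ⟨v, rfl⟩ ⟨m, hm, hιm⟩
        have hv2 : ((v : X × Y)).2 ∈ M := (hmemM'' _).mp v.2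
        have hamb : (((restr (Mc A B C) hM''inv v) : X × Y)) = Mc A B C (v : X × Y) := rfl
        have hamb2 : (((restr (Mc A B C) hM''inv v) : X × Y)) = ((0:X), (m : Y)) := by
          exact (congrArg Subtype.val hιm).symm
        have h3 : (Mc A B C (v : X × Y)).2 = (m : Y) := by
          rw [← hamb, hamb2]
        have hBm : restr B hMB ⟨((v : X × Y)).2, hv2⟩ = m := by
          apply Subtype.ext
          show B ((v : X × Y)).2 = (m : Y)
          exact h3
        have hm0 : m = 0 := Submodule.disjoint_def.mp hPcompl.disjoint m
          ⟨_, hBm⟩ hm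
        rw [← hιm, hm0, map_zero]
      · rw [codisjoint_iff, eq_top_iff]
        intro w _
        have hw2 : ((w : X × Y)).2 ∈ M := (hmemM'' _).mp w.2
        have hwM : (⟨((w : X × Y)).2, hw2⟩ : M) ∈
            LinearMap.range (restr B hMB : M →ₗ[ℂ] M) ⊔ P := by
          rw [codisjoint_iff.mp hPcompl.codisjoint]; trivial
        obtain ⟨rr, ⟨m₁, hm₁⟩, p, hp, hrp⟩ := Submodule.mem_sup.mp hwM
        set u : M'' := ⟨(A' (((w : X × Y)).1 - C ↑m₁), (m₁ : Y)),
          (hmemM'' _).mpr m₁.2⟩ with hu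
        refine Submodule.mem_sup.mpr ⟨restr (Mc A B C) hM''inv u, ⟨u, rfl⟩, ι p,
          ⟨p, hp, rfl⟩, ?_⟩
        apply Subtype.ext
        have h4 : ((restr (Mc A B C) hM''inv u : X × Y)) = Mc A B C (u : X × Y) := rfl
        rw [Submodule.coe_add, h4, hιapp, hu, hTapp]
        have h5 : B (m₁ : Y) = (((restr B hMB : M →ₗ[ℂ] M) m₁ : M) : Y) := rfl
        ext
        · simp [hAA']
        · have h6 : ((rr : Y)) + ((p : Y)) = ((w : X × Y)).2 := by
            have h6' := congrArg (Subtype.val) hrp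
            simpa using h6'
          simp only [Prod.snd_add, hAA']
          rw [h5, hm₁]
          exact h6
    -- quasinilpotency on N'
    have hN'conj : QuasiNilpotentOp (restr (Mc A B C) hN'inv) := by
      set f : (N : Submodule ℂ Y) →L[ℂ] N' := jN.codRestrict N' (fun n => ⟨n, rfl⟩) with hf
      have hmemN' : ∀ v : N', ((v : X × Y)).2 ∈ N := by
        rintro ⟨v, n, rfl⟩
        exact n.2
      set g : (N' : Submodule ℂ (X × Y)) →L[ℂ] N :=
        ((ContinuousLinearMap.snd ℂ X Y).comp N'.subtypeL).codRestrict N hmemN' with hg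
      have h1 : Function.LeftInverse g f := by
        intro n; apply Subtype.ext; rfl
      have h2 : Function.RightInverse g f := by
        rintro ⟨v, n, rfl⟩
        apply Subtype.ext
        show jN ((g ⟨jN n, ⟨n, rfl⟩⟩ : N)) = jN n
        congr 1
      set e := ContinuousLinearEquiv.equivOfInverse f g h1 h2 with he
      refine quasiNilpotent_conj e (S := S) ?_ hNq
      intro n
      apply Subtype.ext
      show Mc A B C (jN n) = jN (S n)
      exact hTjN n
    exact ⟨M'', N', hM''inv, hN'inv, hM''closed, hN'closed, ⟨hdisj, hcodisj⟩,
      ⟨hbdd, hrangeClosed, P'', hP''closed, hPcomplP''⟩, hN'conj⟩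


end PseudoBF
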